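/- arXiv:1401.5282 — 4 statements merged into one kernel-verified Lean document; each statement's English description precedes it below -/
import Mathlib

section
/- Let a, b > 0 with a/b irrational, and let C ∈ ℝ. Then for every ε > 0 there exists T > 0 such that the set { k₁ a + k₂ b + C : k₁, k₂ ∈ ℕ } is ε-dense in [T, ∞); i.e., every t ≥ T is within ε of some element of this set. -/
open MeasureTheory Filter Topology

section Defs

variable {Y : Type*}

def FlowLike [TopologicalSpace Y] (φ : ℝ → Y → Y) : Prop :=
  Continuous (Function.uncurry φ) ∧ (∀ x, φ 0 x = x) ∧ ∀ s t x, φ (s + t) x = φ s (φ t x)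

def Invariant [MeasurableSpace Y] (φ : ℝ → Y → Y) (μ : Measure Y) : Prop :=
  ∀ t : ℝ, Measure.map (φ t) μ = μ

noncomputable def periodicOrbitMeasure [MeasurableSpace Y] (φ : ℝ → Y → Y) (x₀ : Y) (l : ℝ) :
    Measure Y :=
  (ENNReal.ofReal l)⁻¹ • Measure.map (fun t => φ t x₀) (volume.restrict (Set.Ico (0:ℝ) l))

/-- The measure `μ` is the normalized arc-length measure on a periodic orbit. -/
def IsPeriodicOrbitMeasure [MeasurableSpace Y] (φ : ℝ → Y → Y) (μ : Measure Y) : Prop :=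
  ∃ x₀ : Y, ∃ l : ℝ, 0 < l ∧ φ l x₀ = x₀ ∧ μ = periodicOrbitMeasure φ x₀ l

def StronglyMixing [MeasurableSpace Y] (φ : ℝ → Y → Y) (μ : Measure Y) : Prop :=
  ∀ A B : Set Y, MeasurableSet A → MeasurableSet B →
    Tendsto (fun t : ℝ => μ (A ∩ (φ t) ⁻¹' B)) atTop (nhds (μ A * μ B))

def ErgodicFlow [MeasurableSpace Y] (φ : ℝ → Y → Y) (μ : Measure Y) : Prop :=
  Invariant φ μ ∧ ∀ A : Set Y, MeasurableSet A → (∀ t : ℝ, (φ t) ⁻¹' A = A) → μ A = 0 ∨ μ A = 1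

def prodFlow (φ : ℝ → Y → Y) : ℝ → Y × Y → Y × Y := fun t p => (φ t p.1, φ t p.2)

def WeaklyMixing [MeasurableSpace Y] (φ : ℝ → Y → Y) (μ : Measure Y) [SFinite μ] : Prop :=
  ErgodicFlow (prodFlow φ) (μ.prod μ)

def ClosingLemma [MetricSpace Y] (φ : ℝ → Y → Y) : Prop :=
  ∀ v : Y, ∀ ε > (0:ℝ), ∃ V ∈ nhds v, ∃ δ > (0:ℝ), ∃ t₀ > (0:ℝ),
    ∀ w ∈ V, ∀ t > t₀, dist w (φ t w) < δ → φ t w ∈ V →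
      ∃ p₀ : Y, ∃ lp > (0:ℝ), |lp - t| < ε ∧ φ lp p₀ = p₀ ∧
        ∀ s : ℝ, 0 < s → s < min t lp → dist (φ s p₀) (φ s w) < ε

noncomputable def partEntropy [MeasurableSpace Y] (μ : Measure Y) (P : Finset (Set Y)) : ℝ :=
  -∑ q ∈ P, ((μ q).toReal * Real.log (μ q).toReal)

noncomputable def refinePart (T : Y → Y) (n : ℕ) (P : Finset (Set Y)) : Finset (Set Y) :=
  letI := Classical.decEq (Set Y)
  (Fintype.piFinset fun _ : Fin n => P).image fun f => ⋂ i : Fin n, (T^[(i : ℕ)]) ⁻¹' f i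

noncomputable def entTP [MeasurableSpace Y] (μ : Measure Y) (T : Y → Y) (P : Finset (Set Y)) : ℝ :=
  Filter.liminf (fun n : ℕ => partEntropy μ (refinePart T n P) / n) atTop

def IsFinPartition [MeasurableSpace Y] (P : Finset (Set Y)) : Prop :=
  (∀ q ∈ P, MeasurableSet q) ∧ (⋃ q ∈ P, q) = Set.univ ∧
    ∀ q ∈ P, ∀ q' ∈ P, q ≠ q' → Disjoint q q'

noncomputable def entT [MeasurableSpace Y] (μ : Measure Y) (T : Y → Y) : ℝ :=
  ⨆ P : {P : Finset (Set Y) // IsFinPartition P}, entTP μ T (P : Finset (Set Y))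

end Defs

lemma stmt11_key (a b : ℝ) (ha : 0 < a) (hb : 0 < b) (C ε : ℝ) (hε : 0 < ε)
    (n m : ℕ) (hd : 0 < (n : ℝ) * a - (m : ℝ) * b) (hdε : (n : ℝ) * a - (m : ℝ) * b ≤ ε) :
    ∃ T > (0:ℝ), ∀ t ≥ T,
      ∃ k₁ k₂ : ℕ, |(k₁ : ℝ) * a + (k₂ : ℝ) * b + C - t| ≤ ε := by
  set δ : ℝ := (n : ℝ) * a - (m : ℝ) * b with hδdef
  refine ⟨max 1 (C + b * ((m : ℝ) * b / δ + 2)), lt_of_lt_of_le one_pos (le_max_left _ _), ?_⟩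
  intro t ht
  have hmb : (0:ℝ) ≤ (m : ℝ) * b / δ := by positivity
  have ht' : t - C ≥ b * ((m : ℝ) * b / δ + 2) := by
    have := le_trans (le_max_right 1 (C + b * ((m : ℝ) * b / δ + 2))) ht
    linarith
  set t' : ℝ := t - C with ht'def
  have ht'pos : 0 < t' := lt_of_lt_of_le (by nlinarith) ht'
  set K : ℕ := ⌊t' / b⌋₊ with hKdef
  have hKle : (K : ℝ) ≤ t' / b := Nat.floor_le (by positivity)
  have hKlt : t' / b < (K : ℝ) + 1 := Nat.lt_floor_add_one _
  have hKb : (K : ℝ) * b ≤ t' := (le_div_iff₀ hb).mp hKle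
  have hKb' : t' < ((K : ℝ) + 1) * b := (div_lt_iff₀ hb).mp hKlt
  set r : ℝ := t' - (K : ℝ) * b with hrdef
  have hr0 : 0 ≤ r := by linarith
  have hrb : r < b := by nlinarith
  set j : ℕ := ⌊r / δ⌋₊ with hjdef
  have hjle : (j : ℝ) ≤ r / δ := Nat.floor_le (by positivity)
  have hjlt : r / δ < (j : ℝ) + 1 := Nat.lt_floor_add_one _
  have hjδ : (j : ℝ) * δ ≤ r := (le_div_iff₀ hd).mp hjle
  have hjδ' : r < ((j : ℝ) + 1) * δ := (div_lt_iff₀ hd).mp hjlt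
  have hjb : (j : ℝ) ≤ b / δ := le_trans hjle (by gcongr)
  have ht'b : t' / b ≥ (m : ℝ) * b / δ + 2 := (le_div_iff₀ hb).mpr (by linarith [mul_comm b ((m : ℝ) * b / δ + 2)])
  have hjmK : ((j * m : ℕ) : ℝ) < (K : ℝ) := by
    push_cast
    have h1 : (j : ℝ) * m ≤ (b / δ) * m := mul_le_mul_of_nonneg_right hjb (Nat.cast_nonneg m)
    have h2 : (b / δ) * m = (m : ℝ) * b / δ := by ring
    linarith
  have hjmK' : j * m ≤ K := le_of_lt (by exact_mod_cast hjmK)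
  refine ⟨j * n, K - j * m, ?_⟩
  have hcast : ((K - j * m : ℕ) : ℝ) = (K : ℝ) - (j : ℝ) * (m : ℝ) := by
    push_cast [Nat.cast_sub hjmK']
    ring
  push_cast [hcast]
  have hval : (j : ℝ) * (n : ℝ) * a + ((K : ℝ) - (j : ℝ) * (m : ℝ)) * b + C - t
      = (j : ℝ) * δ - r := by
    simp only [hδdef, hrdef, ht'def]; ring
  rw [hval, abs_le]
  constructor <;> nlinarith


/-- If `a, b > 0` with `a/b` irrational and `C ∈ ℝ`, then for every `ε > 0`
the set `{k₁a + k₂b + C : k₁, k₂ ∈ ℕ}` is `ε`-dense in some half-line `[T, ∞)`. -/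
theorem stmt11 (a b : ℝ) (ha : 0 < a) (hb : 0 < b) (hab : Irrational (a / b)) (C : ℝ) :
    ∀ ε > (0:ℝ), ∃ T > (0:ℝ), ∀ t ≥ T,
      ∃ k₁ k₂ : ℕ, |(k₁ : ℝ) * a + (k₂ : ℝ) * b + C - t| ≤ ε := by
  intro ε hε
  set e : ℝ := min ε a with hedef
  have he : 0 < e := lt_min hε ha
  obtain ⟨N, hN⟩ := exists_nat_gt (b / e)
  have hN0 : 0 < N := by
    have : (0:ℝ) < (N : ℝ) := lt_of_le_of_lt (by positivity) hN
    exact_mod_cast this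
  obtain ⟨q, k, hk0, hkN, hqk⟩ := Real.exists_int_int_abs_mul_sub_le (a / b) hN0
  have hsmall : |(k : ℝ) * a - (q : ℝ) * b| < e := by
    have h1 : (k : ℝ) * a - (q : ℝ) * b = ((k : ℝ) * (a / b) - q) * b := by
      field_simp
    rw [h1, abs_mul, abs_of_pos hb]
    calc |(k : ℝ) * (a / b) - q| * b ≤ (1 / (N + 1)) * b := by
          exact mul_le_mul_of_nonneg_right hqk hb.le
      _ < e := by
          rw [div_mul_eq_mul_div, one_mul, div_lt_iff₀ (by positivity)]
          have : b < e * N := by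
            rw [mul_comm, ← div_lt_iff₀ he]; exact hN
          nlinarith
  have hne : (k : ℝ) * a - (q : ℝ) * b ≠ 0 := by
    intro h
    apply hab
    refine ⟨(q : ℚ) / (k : ℚ), ?_⟩
    have hk0' : (k : ℝ) ≠ 0 := by exact_mod_cast hk0.ne'
    have : (k : ℝ) * a = (q : ℝ) * b := by linarith
    push_cast
    rw [div_eq_div_iff hk0' hb.ne']
    linear_combination -this
  have hk1 : (1:ℝ) ≤ (k : ℝ) := by exact_mod_cast hk0
  rcases lt_or_gt_of_ne hne with hneg | hpos
  · -- q*b - k*a ∈ (0, e)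
    have habs : (q : ℝ) * b - (k : ℝ) * a < e := by
      rw [abs_sub_comm, abs_of_pos (by linarith)] at hsmall
      exact hsmall
    have hqb : (0:ℝ) < (q : ℝ) * b := by nlinarith
    have hq0 : (0:ℝ) < (q : ℝ) := by
      rcases mul_pos_iff.mp hqb with ⟨h1, _⟩ | ⟨_, h2⟩
      · exact h1
      · linarith
    have hq0' : 0 ≤ q := by exact_mod_cast hq0.le
    have hk0' : 0 ≤ k := hk0.le
    have hc1 : ((q.toNat : ℕ) : ℝ) = (q : ℝ) := by exact_mod_cast Int.toNat_of_nonneg hq0'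
    have hc2 : ((k.toNat : ℕ) : ℝ) = (k : ℝ) := by exact_mod_cast Int.toNat_of_nonneg hk0'
    obtain ⟨T, hT, H⟩ := stmt11_key b a hb ha C ε hε q.toNat k.toNat
      (by rw [hc1, hc2]; linarith) (by rw [hc1, hc2]; have := min_le_left ε a; linarith)
    refine ⟨T, hT, fun t htT => ?_⟩
    obtain ⟨k₁, k₂, hk⟩ := H t htT
    refine ⟨k₂, k₁, ?_⟩
    rw [show (k₂:ℝ) * a + (k₁:ℝ) * b = (k₁:ℝ) * b + (k₂:ℝ) * a from add_comm _ _]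
    exact hk
  · -- k*a - q*b ∈ (0, e)
    have habs : (k : ℝ) * a - (q : ℝ) * b < e := by
      rw [abs_of_pos (by linarith)] at hsmall
      exact hsmall
    have hea : e ≤ a := min_le_right ε a
    have hqb : (0:ℝ) < (q : ℝ) * b := by nlinarith
    have hq0 : (0:ℝ) < (q : ℝ) := by
      rcases mul_pos_iff.mp hqb with ⟨h1, _⟩ | ⟨_, h2⟩
      · exact h1
      · linarith
    have hq0' : 0 ≤ q := by exact_mod_cast hq0.le
    have hc1 : ((q.toNat : ℕ) : ℝ) = (q : ℝ) := by exact_mod_cast Int.toNat_of_nonneg hq0'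
    have hc2 : ((k.toNat : ℕ) : ℝ) = (k : ℝ) := by exact_mod_cast Int.toNat_of_nonneg hk0.le
    exact stmt11_key a b ha hb C ε hε k.toNat q.toNat
      (by rw [hc1, hc2]; linarith) (by rw [hc1, hc2]; have := min_le_left ε a; linarith)
end

section
/- Let (φ^t) be a continuous flow on a metric space X satisfying: (closing lemma) every point has a neighborhood in which sufficiently-long almost-closed orbit segments are ε-shadowed by genuine periodic orbits, and (topological mixing on X). Then for every ε > 0 and every nonempty open U ⊆ X there exists T > 0 such that for all t ≥ T there is a periodic point of some period l with |l − t| < ε. In particular, the set of periods of periodic orbits is non-arithmetic (not contained in a discrete subgroup c·ℤ of ℝ). -/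
open MeasureTheory Filter Topology

/-- A topologically mixing flow satisfying the closing lemma has, near any
nonempty open set, periodic orbits of every sufficiently large approximate period; in
particular the set of periods is not contained in a discrete subgroup `c·ℤ` of `ℝ`. -/
theorem stmt12 {X : Type*} [MetricSpace X] [Nonempty X]
    (φ : ℝ → X → X) (hφ : FlowLike φ) (hclose : ClosingLemma φ)
    (hmix : ∀ U V : Set X, IsOpen U → IsOpen V → U.Nonempty → V.Nonempty →
      ∃ T : ℝ, ∀ t ≥ T, ((φ t) '' U ∩ V).Nonempty) :
    (∀ ε > (0:ℝ), ∀ U : Set X, IsOpen U → U.Nonempty →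
      ∃ T > (0:ℝ), ∀ t ≥ T, ∃ p : X, ∃ lp : ℝ, 0 < lp ∧ φ lp p = p ∧ |lp - t| < ε) ∧
    ¬ ∃ c : ℝ, ∀ lp : ℝ, 0 < lp → (∃ p : X, φ lp p = p) → ∃ n : ℤ, lp = c * n := by
  have key : ∀ ε > (0:ℝ), ∃ T > (0:ℝ), ∀ t ≥ T,
      ∃ p : X, ∃ lp : ℝ, 0 < lp ∧ φ lp p = p ∧ |lp - t| < ε := by
    intro ε hε
    obtain ⟨v⟩ := ‹Nonempty X›
    obtain ⟨V, hV, δ, hδ, t₀, ht₀, hcl⟩ := hclose v ε hε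
    obtain ⟨r, hr, hrV⟩ := Metric.mem_nhds_iff.mp hV
    set r' := min r (δ/3) with hr'
    have hr'0 : 0 < r' := lt_min hr (by linarith)
    have hr'δ : r' ≤ δ/3 := min_le_right _ _
    have hBsub : Metric.ball v r' ⊆ V :=
      (Metric.ball_subset_ball (min_le_left _ _)).trans hrV
    obtain ⟨T', hT'⟩ := hmix (Metric.ball v r') (Metric.ball v r')
      Metric.isOpen_ball Metric.isOpen_ball
      ⟨v, Metric.mem_ball_self hr'0⟩ ⟨v, Metric.mem_ball_self hr'0⟩
    refine ⟨max T' (t₀ + 1), lt_of_lt_of_le (by linarith) (le_max_right _ _), ?_⟩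
    intro t ht
    have ht1 : T' ≤ t := le_trans (le_max_left _ _) ht
    have ht2 : t₀ + 1 ≤ t := le_trans (le_max_right _ _) ht
    obtain ⟨y, ⟨w, hwB, hwy⟩, hyB⟩ := hT' t ht1
    have hdw : dist w v < r' := Metric.mem_ball.mp hwB
    have hdy : dist (φ t w) v < r' := by rw [hwy]; exact Metric.mem_ball.mp hyB
    have hdist : dist w (φ t w) < δ := by
      calc dist w (φ t w) ≤ dist w v + dist v (φ t w) := dist_triangle _ _ _
        _ = dist w v + dist (φ t w) v := by rw [dist_comm v]
        _ < δ := by linarith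
    have hyV : φ t w ∈ V := hBsub (by rw [hwy]; exact hyB)
    obtain ⟨p₀, lp, hlp0, habs, hper, -⟩ :=
      hcl w (hBsub hwB) t (by linarith) hdist hyV
    exact ⟨p₀, lp, hlp0, hper, habs⟩
  constructor
  · intro ε hε U _ _
    exact key ε hε
  · rintro ⟨c, hc⟩
    -- first, there is some period, so c ≠ 0
    obtain ⟨T₁, hT₁, h₁⟩ := key 1 one_pos
    obtain ⟨p, lp, hlp0, hper, -⟩ := h₁ T₁ le_rfl
    obtain ⟨n₁, hn₁⟩ := hc lp hlp0 ⟨p, hper⟩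
    have hcne : c ≠ 0 := by
      rintro rfl
      rw [hn₁] at hlp0
      simp at hlp0
    set c' := |c| with hc'
    have hc'0 : 0 < c' := abs_pos.mpr hcne
    obtain ⟨T, hT0, hT⟩ := key (c'/4) (by linarith)
    obtain ⟨m, hmge⟩ : ∃ m : ℤ, T / c' ≤ (m:ℝ) := ⟨⌈T/c'⌉, Int.le_ceil _⟩
    have hTm : T ≤ c' * m := by
      rw [← div_le_iff₀' hc'0]; exact hmge
    have htT : T ≤ c' * m + c' / 2 := by linarith
    obtain ⟨q, l, hl0, hlper, hlclose⟩ := hT (c' * m + c' / 2) htT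
    obtain ⟨n, hn⟩ := hc l hl0 ⟨q, hlper⟩
    obtain ⟨n', hn'⟩ : ∃ n' : ℤ, l = c' * n' := by
      rcases abs_choice c with h | h
      · exact ⟨n, by rw [hn, hc', h]⟩
      · refine ⟨-n, ?_⟩
        rw [hn, hc', h]
        push_cast
        ring
    set k : ℤ := n' - m with hk
    have hodd : (2 * k - 1 : ℤ) ≠ 0 := by omega
    have habs1 : (1 : ℤ) ≤ |2 * k - 1| := Int.one_le_abs hodd
    have habsR : (1 : ℝ) ≤ |2 * (k:ℝ) - 1| := by
      calc (1:ℝ) = ((1:ℤ):ℝ) := by norm_num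
        _ ≤ |((2*k - 1 : ℤ) : ℝ)| := by
            rw [← Int.cast_abs]; exact_mod_cast habs1
        _ = |2 * (k:ℝ) - 1| := by push_cast; ring_nf
    have hlt : l - (c' * m + c' / 2) = c' * ((k:ℝ) - 1/2) := by
      rw [hn', hk]
      push_cast
      ring
    have hge : c'/2 ≤ |l - (c' * m + c' / 2)| := by
      rw [hlt, abs_mul, abs_of_pos hc'0]
      have h2 : |(k:ℝ) - 1/2| = |2*(k:ℝ) - 1| / 2 := by
        rw [show (k:ℝ) - 1/2 = (2*(k:ℝ) - 1)/2 by ring, abs_div]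
        norm_num
      have : (1:ℝ)/2 ≤ |(k:ℝ) - 1/2| := by rw [h2]; linarith
      nlinarith
    linarith [hlclose]
end

section
/- Let X be a Polish space with a continuous flow (φ^t). Suppose μ₁, ..., μ_n are Dirac measures on periodic orbits with periods l₁, ..., l_n, and suppose for each N ∈ ℕ there is a periodic orbit of period L_N = ∑_i N p_i l_i + O(1) (with p_i fixed positive integers and the O(1) term bounded uniformly in N) whose orbit spends time N p_i l_i within distance ε_N of the orbit of μ_i, with ε_N → 0. Then the Dirac measures on these periodic orbits converge in the weak-* topology to ∑_i (p_i l_i / ∑_j p_j l_j) μ_i as N → ∞. -/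
open MeasureTheory Filter Topology

section Aux

lemma flow_cont {X : Type*} [TopologicalSpace X] {φ : ℝ → X → X}
    (hφc : Continuous (Function.uncurry φ)) (z : X) : Continuous fun t : ℝ => φ t z :=
  hφc.comp (continuous_id.prodMk continuous_const)

lemma integral_pom {X : Type*} [MetricSpace X] [MeasurableSpace X] [BorelSpace X]
    {φ : ℝ → X → X} (hφc : Continuous (Function.uncurry φ)) {f : X → ℝ} (hf : Continuous f)
    (z : X) {l : ℝ} (hl : 0 < l) :
    ∫ w, f w ∂(periodicOrbitMeasure φ z l) = l⁻¹ * ∫ t in (0:ℝ)..l, f (φ t z) := by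
  have hc : Continuous fun t : ℝ => φ t z := flow_cont hφc z
  rw [periodicOrbitMeasure, integral_smul_measure,
    integral_map hc.aemeasurable hf.aestronglyMeasurable,
    MeasureTheory.integral_Ico_eq_integral_Ioo,
    intervalIntegral.integral_of_le hl.le, MeasureTheory.integral_Ioc_eq_integral_Ioo,
    ENNReal.toReal_inv, ENNReal.toReal_ofReal hl.le, smul_eq_mul]

end Aux


set_option maxHeartbeats 1000000 in
/-- Weak-* convergence of the Dirac measures on long shadowing periodic
orbits towards the corresponding convex combination of the periodic-orbit measures. -/
theorem stmt18 {X : Type*} [MetricSpace X] [MeasurableSpace X] [BorelSpace X]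
    (φ : ℝ → X → X) (hφ : FlowLike φ)
    (n : ℕ) (hn : 0 < n)
    (x : Fin n → X) (l : Fin n → ℝ) (hl : ∀ i, 0 < l i)
    (hxper : ∀ i, φ (l i) (x i) = x i)
    (p : Fin n → ℕ) (hp : ∀ i, 0 < p i)
    (y : ℕ → X) (L : ℕ → ℝ) (hLpos : ∀ N, 0 < L N) (hyper : ∀ N, φ (L N) (y N) = y N)
    (C : ℝ) (hC : ∀ N : ℕ, |L N - ∑ i, (N : ℝ) * (p i : ℝ) * l i| ≤ C)
    (ε : ℕ → ℝ) (hεpos : ∀ N, 0 ≤ ε N) (hε : Tendsto ε atTop (nhds 0))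
    (s τ : ℕ → Fin n → ℝ)
    (hs0 : ∀ N i, 0 ≤ s N i)
    (hsL : ∀ N i, s N i + (N : ℝ) * (p i : ℝ) * l i ≤ L N)
    (hdisj : ∀ N : ℕ, ∀ i j : Fin n, i ≠ j →
      Disjoint (Set.Ioo (s N i) (s N i + (N : ℝ) * (p i : ℝ) * l i))
        (Set.Ioo (s N j) (s N j + (N : ℝ) * (p j : ℝ) * l j)))
    (hshadow : ∀ N : ℕ, ∀ i : Fin n, ∀ t ∈ Set.Icc (0:ℝ) ((N : ℝ) * (p i : ℝ) * l i),
      dist (φ (s N i + t) (y N)) (φ (τ N i + t) (x i)) ≤ ε N) :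
    ∀ f : X → ℝ, UniformContinuous f → (∃ B : ℝ, ∀ z, |f z| ≤ B) →
      Tendsto (fun N => ∫ z, f z ∂(periodicOrbitMeasure φ (y N) (L N))) atTop
        (nhds (∑ i, ((p i : ℝ) * l i / ∑ j, (p j : ℝ) * l j) *
          ∫ z, f z ∂(periodicOrbitMeasure φ (x i) (l i)))) := by
  obtain ⟨hφc, hφ0, hφadd⟩ := hφ
  intro f hfUC hfB
  obtain ⟨B, hB⟩ := hfB
  have hfc : Continuous f := hfUC.continuous
  have hB0 : 0 ≤ B := (abs_nonneg _).trans (hB (x ⟨0, hn⟩))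
  have hC0 : 0 ≤ C := (abs_nonneg _).trans (hC 0)
  set S : ℝ := ∑ j, (p j : ℝ) * l j with hSdef
  have hSpos : 0 < S :=
    Finset.sum_pos (fun i _ => mul_pos (by exact_mod_cast hp i) (hl i))
      ⟨⟨0, hn⟩, Finset.mem_univ _⟩
  have hgc : ∀ z : X, Continuous fun t : ℝ => f (φ t z) := fun z => hfc.comp (flow_cont hφc z)
  set I : Fin n → ℝ := fun i => ∫ t in (0:ℝ)..(l i), f (φ t (x i)) with hIdef
  have hIb : ∀ i, |I i| ≤ B * l i := by
    intro i
    have h1 : ‖∫ t in (0:ℝ)..(l i), f (φ t (x i))‖ ≤ B * |l i - 0| :=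
      intervalIntegral.norm_integral_le_of_norm_le_const fun t _ => by
        simpa using hB (φ t (x i))
    simpa [hIdef, abs_of_nonneg (hl i).le, Real.norm_eq_abs] using h1
  set W : ℝ := ∑ i, (p i : ℝ) * I i with hWdef
  have hWb : |W| ≤ B * S := by
    calc |W| ≤ ∑ i, |(p i : ℝ) * I i| := Finset.abs_sum_le_sum_abs _ _
    _ ≤ ∑ i, (p i : ℝ) * (B * l i) := Finset.sum_le_sum fun i _ => by
        rw [abs_mul, abs_of_nonneg (by positivity : (0:ℝ) ≤ (p i : ℝ))]
        exact mul_le_mul_of_nonneg_left (hIb i) (by positivity)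
    _ = B * S := by rw [hSdef, Finset.mul_sum]; exact Finset.sum_congr rfl fun i _ => by ring
  have htarget : (∑ i, ((p i : ℝ) * l i / S) *
      ∫ z, f z ∂(periodicOrbitMeasure φ (x i) (l i))) = W / S := by
    rw [hWdef, Finset.sum_div]
    refine Finset.sum_congr rfl fun i _ => ?_
    rw [integral_pom hφc hfc (x i) (hl i)]
    have hli : (l i) ≠ 0 := (hl i).ne'
    have hS0 : S ≠ 0 := hSpos.ne'
    field_simp
    ring
  rw [htarget]
  have hAeq : ∀ N, (∫ z, f z ∂(periodicOrbitMeasure φ (y N) (L N)))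
      = (L N)⁻¹ * ∫ t in (0:ℝ)..(L N), f (φ t (y N)) :=
    fun N => integral_pom hφc hfc (y N) (hLpos N)
  rw [Metric.tendsto_atTop]
  intro η hη
  obtain ⟨δ, hδ0, hδ⟩ := Metric.uniformContinuous_iff.1 hfUC (η/4) (by positivity)
  have hev1 : ∀ᶠ N : ℕ in atTop, ε N < δ := hε.eventually (gt_mem_nhds hδ0)
  have hev2 : ∀ᶠ N : ℕ in atTop, (2*C)/S ≤ (N:ℝ) :=
    tendsto_natCast_atTop_atTop.eventually_ge_atTop _
  have hev3 : ∀ᶠ N : ℕ in atTop, (8*B*C/η + 1)/S ≤ (N:ℝ) :=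
    tendsto_natCast_atTop_atTop.eventually_ge_atTop _
  have hfin : ∀ᶠ N : ℕ in atTop,
      dist (∫ z, f z ∂(periodicOrbitMeasure φ (y N) (L N))) (W / S) < η := by
    filter_upwards [hev1, hev2, hev3] with N hNδ hN2 hN3
    rw [hAeq N]
    set M : Fin n → ℝ := fun i => (N : ℝ) * (p i : ℝ) * l i with hMdef
    have hMnn : ∀ i, 0 ≤ M i := fun i => by
      have h0 : (0:ℝ) ≤ (N:ℝ) := Nat.cast_nonneg N
      have h1 : (0:ℝ) ≤ l i := (hl i).le
      simp only [hMdef]; positivity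
    have hMsum : ∑ i, M i = (N:ℝ) * S := by
      rw [hSdef, Finset.mul_sum]
      exact Finset.sum_congr rfl fun i _ => by simp only [hMdef]; ring
    have hLpos' : 0 < L N := hLpos N
    have hCN : |L N - (N:ℝ)*S| ≤ C := by
      rw [← hMsum]; simpa only [hMdef] using hC N
    have hLge : (N:ℝ) * S - C ≤ L N := by linarith [(abs_le.1 hCN).1]
    have hLle : L N ≤ (N:ℝ) * S + C := by linarith [(abs_le.1 hCN).2]
    have hNS2C : 2*C ≤ (N:ℝ)*S := by
      have := (div_le_iff₀ hSpos).1 hN2; linarith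
    have hNS8 : 8*B*C/η + 1 ≤ (N:ℝ)*S := by
      have := (div_le_iff₀ hSpos).1 hN3; linarith
    have hNSpos : 0 < (N:ℝ)*S := by
      have h1 : (0:ℝ) < 8*B*C/η + 1 := by positivity
      linarith
    have hL2 : (N:ℝ)*S/2 ≤ L N := by linarith
    set g : ℝ → ℝ := fun t => f (φ t (y N)) with hgdef
    have hgcont : Continuous g := hgc (y N)
    set A : Fin n → Set ℝ := fun i => Set.Ioo (s N i) (s N i + M i) with hAdef
    have hAmeas : ∀ i, MeasurableSet (A i) := fun i => measurableSet_Ioo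
    have hAsub : ∀ i, A i ⊆ Set.Ioc 0 (L N) := by
      intro i t ht
      have h1 := hsL N i
      simp only [hAdef, hMdef] at ht h1 ⊢
      exact ⟨lt_of_le_of_lt (hs0 N i) ht.1, le_of_lt (lt_of_lt_of_le ht.2 h1)⟩
    set U : Set ℝ := ⋃ i ∈ (Finset.univ : Finset (Fin n)), A i with hUdef
    have hUmeas : MeasurableSet U := Finset.measurableSet_biUnion _ fun i _ => hAmeas i
    have hUsub : U ⊆ Set.Ioc 0 (L N) := by
      rw [hUdef]; exact Set.iUnion₂_subset fun i _ => hAsub i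
    have hIocInt : IntegrableOn g (Set.Ioc 0 (L N)) := hgcont.integrableOn_Ioc
    have hAdisj : (↑(Finset.univ : Finset (Fin n)) : Set (Fin n)).PairwiseDisjoint A := by
      intro i _ j _ hij
      simp only [Function.onFun, hAdef]
      exact hdisj N i j hij
    have hUvol : volume U = ∑ i, ENNReal.ofReal (M i) := by
      rw [hUdef, measure_biUnion_finset hAdisj fun i _ => hAmeas i]
      refine Finset.sum_congr rfl fun i _ => ?_
      simp only [hAdef, Real.volume_Ioo]
      congr 1; ring
    have hUvol_le : volume U ≤ ENNReal.ofReal (L N) := by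
      have h1 : volume U ≤ volume (Set.Ioc (0:ℝ) (L N)) := measure_mono hUsub
      rwa [Real.volume_Ioc, sub_zero] at h1
    have hUfin : volume U ≠ ⊤ := (lt_of_le_of_lt hUvol_le ENNReal.ofReal_lt_top).ne
    have hdiffmeas : MeasurableSet (Set.Ioc (0:ℝ) (L N) \ U) := measurableSet_Ioc.diff hUmeas
    have hintU : IntegrableOn g U := hIocInt.mono_set hUsub
    have hintD : IntegrableOn g (Set.Ioc 0 (L N) \ U) := hIocInt.mono_set Set.diff_subset
    have hsplit : (∫ t in (0:ℝ)..(L N), g t)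
        = (∑ i, ∫ t in A i, g t) + ∫ t in Set.Ioc 0 (L N) \ U, g t := by
      rw [intervalIntegral.integral_of_le hLpos'.le]
      have hU : Set.Ioc (0:ℝ) (L N) = U ∪ (Set.Ioc 0 (L N) \ U) :=
        (Set.union_diff_cancel hUsub).symm
      conv_lhs => rw [hU]
      rw [setIntegral_union Set.disjoint_sdiff_right hdiffmeas hintU hintD]
      congr 1
      rw [hUdef, integral_biUnion_finset _ (fun i _ => hAmeas i) hAdisj
        (fun i _ => hIocInt.mono_set (hAsub i))]
    have hsum_le : ∑ i, ENNReal.ofReal (M i) ≤ ENNReal.ofReal (L N) := by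
      rw [← hUvol]; exact hUvol_le
    have hDvolR : (volume (Set.Ioc 0 (L N) \ U)).toReal = L N - (N:ℝ)*S := by
      rw [measure_diff hUsub hUmeas.nullMeasurableSet hUfin, Real.volume_Ioc, sub_zero, hUvol,
        ENNReal.toReal_sub_of_le hsum_le ENNReal.ofReal_ne_top,
        ENNReal.toReal_ofReal hLpos'.le]
      congr 1
      rw [← hMsum, ENNReal.toReal_sum fun i _ => ENNReal.ofReal_ne_top]
      exact Finset.sum_congr rfl fun i _ => ENNReal.toReal_ofReal (hMnn i)
    have hDfin : volume (Set.Ioc 0 (L N) \ U) < ⊤ := by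
      refine lt_of_le_of_lt (measure_mono Set.diff_subset) ?_
      rw [Real.volume_Ioc]; exact ENNReal.ofReal_lt_top
    have hRest : |∫ t in Set.Ioc 0 (L N) \ U, g t| ≤ B * C := by
      have h1 : ‖∫ t in Set.Ioc 0 (L N) \ U, g t‖
          ≤ B * (volume (Set.Ioc 0 (L N) \ U)).toReal :=
        norm_setIntegral_le_of_norm_le_const hDfin
          (fun t _ => by simpa [hgdef] using hB (φ t (y N)))
      rw [hDvolR, Real.norm_eq_abs] at h1
      have h2 : L N - (N:ℝ)*S ≤ C := by linarith
      exact h1.trans (mul_le_mul_of_nonneg_left h2 hB0)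
    have hAi : ∀ i, (∫ t in A i, g t) = ∫ t in (0:ℝ)..(M i), g (s N i + t) := by
      intro i
      simp only [hAdef]
      rw [intervalIntegral.integral_comp_add_left g (s N i), add_zero,
        intervalIntegral.integral_of_le (by linarith [hMnn i] : s N i ≤ s N i + M i),
        MeasureTheory.integral_Ioc_eq_integral_Ioo]
    have hKi : ∀ i, (∫ t in (0:ℝ)..(M i), f (φ (τ N i + t) (x i)))
        = ((N:ℝ) * (p i : ℝ)) * I i := by
      intro i
      have hper : Function.Periodic (fun t => f (φ t (x i))) (l i) := by
        intro t
        have h1 : φ (t + l i) (x i) = φ t (x i) := by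
          rw [hφadd t (l i) (x i), hxper i]
        simp only [h1]
      have hint : ∀ a b, IntervalIntegrable (fun t => f (φ t (x i))) volume a b :=
        fun a b => (hgc (x i)).intervalIntegrable a b
      have hMi : M i = (((N * p i : ℕ) : ℤ)) • (l i) := by
        simp only [hMdef, zsmul_eq_mul]; push_cast; ring
      rw [intervalIntegral.integral_comp_add_left (fun t => f (φ t (x i))) (τ N i), add_zero, hMi,
        hper.intervalIntegral_add_zsmul_eq ((N * p i : ℕ) : ℤ) (τ N i) hint,
        hper.intervalIntegral_add_eq (τ N i) 0, zero_add]
      simp only [zsmul_eq_mul, hIdef]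
      push_cast
      ring
    have hdiffi : ∀ i, |(∫ t in (0:ℝ)..(M i), g (s N i + t)) - ((N:ℝ) * (p i:ℝ)) * I i|
        ≤ η/4 * M i := by
      intro i
      have hc1 : Continuous fun t : ℝ => g (s N i + t) :=
        hgcont.comp (continuous_const.add continuous_id)
      have hc2 : Continuous fun t : ℝ => f (φ (τ N i + t) (x i)) :=
        (hgc (x i)).comp (continuous_const.add continuous_id)
      rw [← hKi i, ← intervalIntegral.integral_sub (hc1.intervalIntegrable 0 (M i))
        (hc2.intervalIntegrable 0 (M i))]
      have hbd : ∀ t ∈ Set.uIoc (0:ℝ) (M i),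
          ‖g (s N i + t) - f (φ (τ N i + t) (x i))‖ ≤ η/4 := by
        intro t ht
        rw [Set.uIoc_of_le (hMnn i)] at ht
        have hts : t ∈ Set.Icc (0:ℝ) ((N : ℝ) * (p i : ℝ) * l i) := by
          constructor
          · exact ht.1.le
          · have := ht.2; simp only [hMdef] at this; exact this
        have hd : dist (φ (s N i + t) (y N)) (φ (τ N i + t) (x i)) ≤ ε N := hshadow N i t hts
        have h2 : dist (f (φ (s N i + t) (y N))) (f (φ (τ N i + t) (x i))) < η/4 :=
          hδ (lt_of_le_of_lt hd hNδ)
        simp only [hgdef, Real.norm_eq_abs, ← Real.dist_eq]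
        exact h2.le
      have h1 := intervalIntegral.norm_integral_le_of_norm_le_const hbd
      simpa [abs_of_nonneg (hMnn i), Real.norm_eq_abs] using h1
    have hEbound : |(∫ t in (0:ℝ)..(L N), g t) - (N:ℝ) * W| ≤ η/4 * ((N:ℝ)*S) + B*C := by
      have hNW : (N:ℝ) * W = ∑ i, ((N:ℝ)*(p i:ℝ)) * I i := by
        rw [hWdef, Finset.mul_sum]
        exact Finset.sum_congr rfl fun i _ => by ring
      have hAsum : ∑ i, ∫ t in A i, g t = ∑ i, ∫ t in (0:ℝ)..(M i), g (s N i + t) :=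
        Finset.sum_congr rfl fun i _ => hAi i
      have e1 : (∫ t in (0:ℝ)..(L N), g t) - (N:ℝ) * W
          = (∑ i, ((∫ t in (0:ℝ)..(M i), g (s N i + t)) - ((N:ℝ) * (p i:ℝ)) * I i))
            + ∫ t in Set.Ioc 0 (L N) \ U, g t := by
        rw [hsplit, hNW, hAsum, Finset.sum_sub_distrib]
        ring
      rw [e1]
      calc |(∑ i, ((∫ t in (0:ℝ)..(M i), g (s N i + t)) - ((N:ℝ) * (p i:ℝ)) * I i))
            + ∫ t in Set.Ioc 0 (L N) \ U, g t|
          ≤ |∑ i, ((∫ t in (0:ℝ)..(M i), g (s N i + t)) - ((N:ℝ) * (p i:ℝ)) * I i)|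
            + |∫ t in Set.Ioc 0 (L N) \ U, g t| := abs_add_le _ _
        _ ≤ (∑ i, η/4 * M i) + B * C := by
            refine add_le_add ?_ hRest
            exact (Finset.abs_sum_le_sum_abs _ _).trans (Finset.sum_le_sum fun i _ => hdiffi i)
        _ = η/4 * ((N:ℝ)*S) + B*C := by rw [← Finset.mul_sum, hMsum]
    rw [Real.dist_eq]
    have hLne : L N ≠ 0 := hLpos'.ne'
    have hSne : S ≠ 0 := hSpos.ne'
    have key : (L N)⁻¹ * (∫ t in (0:ℝ)..(L N), g t) - W / S
        = (W * ((N:ℝ)*S - L N) + S * ((∫ t in (0:ℝ)..(L N), g t) - (N:ℝ)*W)) / (L N * S) := by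
      field_simp
      ring
    rw [key, abs_div, abs_of_pos (mul_pos hLpos' hSpos), div_lt_iff₀ (mul_pos hLpos' hSpos)]
    have hnum : |W * ((N:ℝ)*S - L N) + S * ((∫ t in (0:ℝ)..(L N), g t) - (N:ℝ)*W)|
        ≤ B*S*C + S*(η/4*((N:ℝ)*S) + B*C) := by
      calc |W * ((N:ℝ)*S - L N) + S * ((∫ t in (0:ℝ)..(L N), g t) - (N:ℝ)*W)|
          ≤ |W * ((N:ℝ)*S - L N)| + |S * ((∫ t in (0:ℝ)..(L N), g t) - (N:ℝ)*W)| := abs_add_le _ _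
        _ ≤ B*S*C + S*(η/4*((N:ℝ)*S) + B*C) := by
            rw [abs_mul, abs_mul, abs_of_pos hSpos]
            refine add_le_add ?_ (mul_le_mul_of_nonneg_left hEbound hSpos.le)
            have habs : |(N:ℝ)*S - L N| ≤ C := by rw [abs_sub_comm]; exact hCN
            exact mul_le_mul hWb habs (abs_nonneg _) (by positivity)
    have hstep : B*S*C + S*(η/4*((N:ℝ)*S) + B*C) < η * (L N * S) := by
      have h8 : 8*B*C + η ≤ η * ((N:ℝ)*S) := by
        have h9 := mul_le_mul_of_nonneg_left hNS8 hη.le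
        have h10 : η * (8*B*C/η + 1) = 8*B*C + η := by field_simp
        linarith
      have e1 : S * (8*B*C + η) ≤ S * (η * ((N:ℝ)*S)) :=
        mul_le_mul_of_nonneg_left h8 hSpos.le
      have e2 : η * ((N:ℝ)*S/2) ≤ η * L N := mul_le_mul_of_nonneg_left hL2 hη.le
      have e3 : S * (η * ((N:ℝ)*S/2)) ≤ S * (η * L N) :=
        mul_le_mul_of_nonneg_left e2 hSpos.le
      nlinarith [e1, e3, mul_pos hSpos hη]
    exact lt_of_le_of_lt hnum hstep
  obtain ⟨N₀, hN₀⟩ := eventually_atTop.1 hfin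
  exact ⟨N₀, hN₀⟩
end

section
/- Let X be a complete separable metric space with a continuous flow. For closed sets F₁, F₂ ⊆ X, open sets G ⊇ F₁, and parameters ε ∈ (0,1), η ∈ (0, 2ε²/3), r ∈ (0,1), m ∈ ℕ, the set ⋂_{t ≥ m} { μ ∈ M¹(X) : μ(F₁) ≥ ε, μ(F₂) ≥ ε, μ(G ∩ φ^{-t}G) ≤ r, r ≤ μ(F₁)² + η } is closed in the weak-* topology, and contains no Dirac measure supported on a periodic orbit. -/
open MeasureTheory Filter Topology

section Stmt19Aux

open scoped ENNReal

variable {X : Type*} [MetricSpace X] [PolishSpace X] [MeasurableSpace X] [BorelSpace X]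

set_option linter.unusedSectionVars false in
/-- One closed constraint set in the weak-* topology. -/
lemma stmt19_aux_closed (F₁ F₂ G' : Set X) (hF₁ : IsClosed F₁) (hF₂ : IsClosed F₂)
    (hG' : IsOpen G') (ε' η' r' : ℝ≥0∞) :
    IsClosed {ν : ProbabilityMeasure X |
      ε' ≤ ν.toMeasure F₁ ∧ ε' ≤ ν.toMeasure F₂ ∧
      ν.toMeasure G' ≤ r' ∧ r' ≤ (ν.toMeasure F₁) ^ 2 + η'} := by
  set C := {ν : ProbabilityMeasure X |
      ε' ≤ ν.toMeasure F₁ ∧ ε' ≤ ν.toMeasure F₂ ∧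
      ν.toMeasure G' ≤ r' ∧ r' ≤ (ν.toMeasure F₁) ^ 2 + η'} with hC
  apply isClosed_of_closure_subset
  intro μ hμ
  have hne : (𝓝[C] μ).NeBot := mem_closure_iff_nhdsWithin_neBot.mp hμ
  set L := 𝓝[C] μ with hL
  have hT : Tendsto (fun ν : ProbabilityMeasure X => ν) L (𝓝 μ) :=
    tendsto_id.mono_left nhdsWithin_le_nhds
  have hmem : ∀ᶠ ν in L, ν ∈ C := eventually_mem_nhdsWithin
  have hclosed1 : (L.limsup fun ν : ProbabilityMeasure X => ν.toMeasure F₁) ≤ μ.toMeasure F₁ :=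
    ProbabilityMeasure.limsup_measure_closed_le_of_tendsto hT hF₁
  have hclosed2 : (L.limsup fun ν : ProbabilityMeasure X => ν.toMeasure F₂) ≤ μ.toMeasure F₂ :=
    ProbabilityMeasure.limsup_measure_closed_le_of_tendsto hT hF₂
  have hopen : μ.toMeasure G' ≤ L.liminf fun ν : ProbabilityMeasure X => ν.toMeasure G' :=
    ProbabilityMeasure.le_liminf_measure_open_of_tendsto hT hG'
  refine ⟨?_, ?_, ?_, ?_⟩
  · refine le_trans (le_limsup_of_frequently_le'
      ((hmem.mono fun ν h => h.1).frequently)) hclosed1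
  · refine le_trans (le_limsup_of_frequently_le'
      ((hmem.mono fun ν h => h.2.1).frequently)) hclosed2
  · refine le_trans hopen (liminf_le_of_frequently_le'
      ((hmem.mono fun ν h => h.2.2.1).frequently))
  · set f : ℝ≥0∞ → ℝ≥0∞ := fun x => x ^ 2 + η' with hf
    have f_mono : Monotone f := fun a b h => by simp only [hf]; gcongr
    have f_cont : Continuous f := (ENNReal.continuous_pow 2).add continuous_const
    have key : f (L.limsup fun ν : ProbabilityMeasure X => ν.toMeasure F₁)
        = L.limsup fun ν : ProbabilityMeasure X => f (ν.toMeasure F₁) :=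
      f_mono.map_limsup_of_continuousAt _ f_cont.continuousAt
    have h1 : r' ≤ L.limsup fun ν : ProbabilityMeasure X => f (ν.toMeasure F₁) :=
      le_limsup_of_frequently_le' ((hmem.mono fun ν h => h.2.2.2).frequently)
    calc r' ≤ f (L.limsup fun ν : ProbabilityMeasure X => ν.toMeasure F₁) := key ▸ h1
      _ ≤ f (μ.toMeasure F₁) := f_mono hclosed1
      _ = (μ.toMeasure F₁) ^ 2 + η' := rfl

set_option linter.unusedSectionVars false in
/-- For a periodic orbit measure there is `T ≥ m` (a multiple of the period) with
`μ (G ∩ φ_T⁻¹ G) = μ G`. -/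
lemma stmt19_aux_periodic (φ : ℝ → X → X) (hφ : FlowLike φ) (G : Set X) (hG : IsOpen G)
    (x₀ : X) (l : ℝ) (hl : 0 < l) (hx : φ l x₀ = x₀) (m : ℕ)
    (μ : ProbabilityMeasure X) (hμ : μ.toMeasure = periodicOrbitMeasure φ x₀ l) :
    ∃ T : ℝ, (m : ℝ) ≤ T ∧ μ.toMeasure (G ∩ (φ T) ⁻¹' G) = μ.toMeasure G := by
  have hfix : ∀ n : ℕ, φ ((n : ℝ) * l) x₀ = x₀ := by
    intro n
    induction n with
    | zero => simpa using hφ.2.1 x₀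
    | succ k ih =>
        have : ((k + 1 : ℕ) : ℝ) * l = l + (k : ℝ) * l := by push_cast; ring
        rw [this, hφ.2.2, ih, hx]
  set j : ℕ := ⌈(m : ℝ) / l⌉₊ with hj
  refine ⟨(j : ℝ) * l, ?_, ?_⟩
  · have h1 : (m : ℝ) / l ≤ (j : ℕ) := Nat.le_ceil _
    calc (m : ℝ) = (m : ℝ) / l * l := by field_simp
      _ ≤ (j : ℝ) * l := by nlinarith
  · set T := (j : ℝ) * l with hT
    have hTfix : ∀ s : ℝ, φ T (φ s x₀) = φ s x₀ := by
      intro s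
      rw [← hφ.2.2, add_comm, hφ.2.2, hfix]
    have hpre : (fun s : ℝ => φ s x₀) ⁻¹' (G ∩ (φ T) ⁻¹' G) = (fun s : ℝ => φ s x₀) ⁻¹' G := by
      ext s
      simp only [Set.mem_preimage, Set.mem_inter_iff, hTfix s, and_self]
    have hcont : Continuous (fun s : ℝ => φ s x₀) :=
      hφ.1.comp (continuous_id.prodMk continuous_const)
    have hmap : ∀ A : Set X, MeasurableSet A →
        μ.toMeasure A = (ENNReal.ofReal l)⁻¹ *
          volume ((fun s : ℝ => φ s x₀) ⁻¹' A ∩ Set.Ico (0:ℝ) l) := by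
      intro A hA
      rw [hμ, periodicOrbitMeasure, Measure.smul_apply, smul_eq_mul,
        Measure.map_apply hcont.measurable hA, Measure.restrict_apply (hcont.measurable hA)]
    have hmeasG : MeasurableSet G := hG.measurableSet
    have hmeasGT : MeasurableSet (G ∩ (φ T) ⁻¹' G) := by
      have : Continuous (φ T) := hφ.1.comp (continuous_const.prodMk continuous_id)
      exact hmeasG.inter ((hG.preimage this).measurableSet)
    rw [hmap _ hmeasGT, hmap _ hmeasG, hpre]

end Stmt19Aux

/-- The sets used in the proof that generic measures are not strongly
mixing: for closed disjoint `F₁, F₂`, open `G ⊇ F₁` and the given parameters, the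
intersection over `t ≥ m` of the constraint sets is weak-* closed and contains no
Dirac measure on a periodic orbit. -/
theorem stmt19 {X : Type*} [MetricSpace X] [PolishSpace X] [MeasurableSpace X] [BorelSpace X]
    (φ : ℝ → X → X) (hφ : FlowLike φ)
    (F₁ F₂ : Set X) (hF₁ : IsClosed F₁) (hF₂ : IsClosed F₂) (hdisj : Disjoint F₁ F₂)
    (G : Set X) (hG : IsOpen G) (hFG : F₁ ⊆ G)
    (ε η r : ℝ) (hε : ε ∈ Set.Ioo (0:ℝ) 1) (hη : η ∈ Set.Ioo (0:ℝ) (2 * ε ^ 2 / 3))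
    (hr : r ∈ Set.Ioo (0:ℝ) 1) (m : ℕ)
    (S : Set {μ : ProbabilityMeasure X // Invariant φ μ.toMeasure})
    (hS : S = {μ : {μ : ProbabilityMeasure X // Invariant φ μ.toMeasure} |
      ∀ t : ℝ, (m : ℝ) ≤ t →
        ENNReal.ofReal ε ≤ (μ : ProbabilityMeasure X).toMeasure F₁ ∧
        ENNReal.ofReal ε ≤ (μ : ProbabilityMeasure X).toMeasure F₂ ∧
        (μ : ProbabilityMeasure X).toMeasure (G ∩ (φ t) ⁻¹' G) ≤ ENNReal.ofReal r ∧
        ENNReal.ofReal r ≤ ((μ : ProbabilityMeasure X).toMeasure F₁) ^ 2 +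
          ENNReal.ofReal η}) :
    IsClosed S ∧
    ∀ μ : {μ : ProbabilityMeasure X // Invariant φ μ.toMeasure},
      IsPeriodicOrbitMeasure φ (μ : ProbabilityMeasure X).toMeasure → μ ∉ S := by
  subst hS
  have hφt : ∀ t : ℝ, Continuous (φ t) := fun t =>
    hφ.1.comp (continuous_const.prodMk continuous_id)
  constructor
  · have heq : {μ : {μ : ProbabilityMeasure X // Invariant φ μ.toMeasure} |
        ∀ t : ℝ, (m : ℝ) ≤ t →
          ENNReal.ofReal ε ≤ (μ : ProbabilityMeasure X).toMeasure F₁ ∧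
          ENNReal.ofReal ε ≤ (μ : ProbabilityMeasure X).toMeasure F₂ ∧
          (μ : ProbabilityMeasure X).toMeasure (G ∩ (φ t) ⁻¹' G) ≤ ENNReal.ofReal r ∧
          ENNReal.ofReal r ≤ ((μ : ProbabilityMeasure X).toMeasure F₁) ^ 2 +
            ENNReal.ofReal η} =
      ⋂ t : ℝ, ⋂ (_ : (m : ℝ) ≤ t),
        (Subtype.val ⁻¹' {ν : ProbabilityMeasure X |
          ENNReal.ofReal ε ≤ ν.toMeasure F₁ ∧ ENNReal.ofReal ε ≤ ν.toMeasure F₂ ∧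
          ν.toMeasure (G ∩ (φ t) ⁻¹' G) ≤ ENNReal.ofReal r ∧
          ENNReal.ofReal r ≤ (ν.toMeasure F₁) ^ 2 + ENNReal.ofReal η}) := by
      ext μ
      simp only [Set.mem_setOf_eq, Set.mem_iInter, Set.mem_preimage]
    rw [heq]
    exact isClosed_iInter fun t => isClosed_iInter fun _ =>
      (stmt19_aux_closed F₁ F₂ (G ∩ (φ t) ⁻¹' G) hF₁ hF₂
        (hG.inter (hG.preimage (hφt t))) _ _ _).preimage continuous_subtype_val
  · rintro μ ⟨x₀, l, hl, hx, hμeq⟩ hμS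
    obtain ⟨T, hTm, hTeq⟩ := stmt19_aux_periodic φ hφ G hG x₀ l hl hx m μ.val hμeq
    obtain ⟨h1, h2, h3, h4⟩ := hμS T hTm
    rw [hTeq] at h3
    set ν := (μ.val).toMeasure with hν
    have hf1 : ν F₁ ≠ ⊤ := measure_ne_top ν F₁
    have hf2 : ν F₂ ≠ ⊤ := measure_ne_top ν F₂
    have hsum : ν F₁ + ν F₂ ≤ 1 := by
      rw [← measure_union hdisj hF₂.measurableSet]
      exact prob_le_one
    have hmono : ν F₁ ≤ ν G := measure_mono hFG
    set a := (ν F₁).toReal with ha'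
    set b := (ν F₂).toReal with hb'
    have ha : ε ≤ a := by
      have := ENNReal.toReal_mono hf1 h1
      rwa [ENNReal.toReal_ofReal hε.1.le] at this
    have hb : ε ≤ b := by
      have := ENNReal.toReal_mono hf2 h2
      rwa [ENNReal.toReal_ofReal hε.1.le] at this
    have hab : a + b ≤ 1 := by
      have := ENNReal.toReal_mono ENNReal.one_ne_top hsum
      rwa [ENNReal.toReal_add hf1 hf2, ENNReal.toReal_one] at this
    have hgr : (ν G).toReal ≤ r := by
      have := ENNReal.toReal_mono ENNReal.ofReal_ne_top h3
      rwa [ENNReal.toReal_ofReal hr.1.le] at this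
    have hag : a ≤ (ν G).toReal := ENNReal.toReal_mono (measure_ne_top ν G) hmono
    have hra : r ≤ a ^ 2 + η := by
      have hne : (ν F₁) ^ 2 + ENNReal.ofReal η ≠ ⊤ :=
        ENNReal.add_ne_top.mpr ⟨ENNReal.pow_ne_top hf1, ENNReal.ofReal_ne_top⟩
      have := ENNReal.toReal_mono hne h4
      rwa [ENNReal.toReal_ofReal hr.1.le,
        ENNReal.toReal_add (ENNReal.pow_ne_top hf1) ENNReal.ofReal_ne_top,
        ENNReal.toReal_pow, ENNReal.toReal_ofReal hη.1.le] at this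
    have hεa : ε * ε ≤ a * (1 - a) :=
      mul_le_mul ha (by linarith) hε.1.le (by linarith [hε.1])
    nlinarith [hη.2, hη.1, hε.1]
end
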